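/- Define a_0 = 1/2 and, for each integer i ≥ 1, a_i = (1 − 2^{1−2i})·ζ(2i), where ζ is the Riemann zeta function. Then there exists a constant C > 1 such that for every integer i ≥ 0: 1/(C·2^{2i}) < a_{i+1} − a_i < C/2^{2i}. -/

import Mathlib

private lemma aux_summable_F {s : ℕ} (hs : 2 ≤ s) :
    Summable (fun n : ℕ => 1 / ((n : ℝ) + 1) ^ s) := by
  have h2 : Summable (fun n : ℕ => 1 / ((n : ℝ)) ^ 2) :=
    Real.summable_one_div_nat_pow.mpr one_lt_two
  have h2' : Summable (fun n : ℕ => 1 / ((n : ℝ) + 1) ^ 2) := by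
    have := (summable_nat_add_iff 1).mpr h2
    simpa using this
  refine h2'.of_nonneg_of_le (fun n => by positivity) (fun n => ?_)
  apply one_div_le_one_div_of_le (by positivity)
  exact pow_le_pow_right₀ (by linarith [Nat.cast_nonneg (α := ℝ) n]) hs

private lemma aux_P_nonneg (s : ℕ) (k : ℕ) :
    0 ≤ 1 / (2 * (k : ℝ) + 1) ^ s - 1 / (2 * (k : ℝ) + 2) ^ s := by
  have h1 : (0:ℝ) < 2 * (k : ℝ) + 1 := by positivity
  have : (2 * (k : ℝ) + 1) ^ s ≤ (2 * (k : ℝ) + 2) ^ s :=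
    pow_le_pow_left₀ (by positivity) (by linarith) s
  have := one_div_le_one_div_of_le (by positivity) this
  linarith

private lemma aux_summable_P {s : ℕ} (hs : 2 ≤ s) :
    Summable (fun k : ℕ => 1 / (2 * (k : ℝ) + 1) ^ s - 1 / (2 * (k : ℝ) + 2) ^ s) := by
  refine (aux_summable_F hs).of_nonneg_of_le (aux_P_nonneg s) (fun k => ?_)
  have h1 : (0:ℝ) < 2 * (k : ℝ) + 2 := by positivity
  have h2 : (0:ℝ) < ((k:ℝ) + 1) ^ s := by positivity
  have h3 : ((k:ℝ) + 1) ^ s ≤ (2 * (k : ℝ) + 1) ^ s :=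
    pow_le_pow_left₀ (by positivity) (by linarith) s
  have h4 := one_div_le_one_div_of_le h2 h3
  have h5 : (0:ℝ) < 1 / (2 * (k : ℝ) + 2) ^ s := by positivity
  linarith



private lemma aux_eta_real {s : ℕ} (hs : 2 ≤ s) :
    (1 - 2 / 2 ^ s) * (∑' n : ℕ, 1 / ((n : ℝ) + 1) ^ s)
      = ∑' k : ℕ, (1 / (2 * (k : ℝ) + 1) ^ s - 1 / (2 * (k : ℝ) + 2) ^ s) := by
  set F : ℕ → ℝ := fun n => 1 / ((n : ℝ) + 1) ^ s with hF
  have hFs := aux_summable_F hs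
  have he : Summable (fun k : ℕ => F (2 * k)) :=
    hFs.comp_injective (fun a b h => by omega)
  have ho : Summable (fun k : ℕ => F (2 * k + 1)) :=
    hFs.comp_injective (fun a b h => by omega)
  have hsplit : (∑' k : ℕ, F (2 * k)) + (∑' k : ℕ, F (2 * k + 1)) = ∑' n : ℕ, F n :=
    tsum_even_add_odd he ho
  have hodd : (∑' k : ℕ, F (2 * k + 1)) = (1 / 2 ^ s) * ∑' n : ℕ, F n := by
    rw [← tsum_mul_left]
    congr 1
    funext k
    have h2 : ((2 * k + 1 : ℕ) : ℝ) + 1 = 2 * ((k : ℝ) + 1) := by push_cast; ring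
    simp only [hF, h2, mul_pow, one_div, mul_inv]
  have key : (∑' k : ℕ, F (2 * k)) - (∑' k : ℕ, F (2 * k + 1))
      = (1 - 2 / 2 ^ s) * ∑' n : ℕ, F n := by
    linear_combination hsplit - 2 * hodd
  rw [← key, ← Summable.tsum_sub he ho]
  refine tsum_congr fun k => ?_
  have h1 : ((2 * k : ℕ) : ℝ) + 1 = 2 * (k : ℝ) + 1 := by push_cast; ring
  have h2 : ((2 * k + 1 : ℕ) : ℝ) + 1 = 2 * (k : ℝ) + 2 := by push_cast; ring
  simp only [hF, h1, h2]



private lemma aux_eta {s : ℕ} (hs : 2 ≤ s) :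
    ((1 : ℂ) - (2 : ℂ) ^ ((1 : ℂ) - (s : ℂ))) * riemannZeta (s : ℂ)
      = ((∑' k : ℕ, (1 / (2 * (k : ℝ) + 1) ^ s - 1 / (2 * (k : ℝ) + 2) ^ s) : ℝ) : ℂ) := by
  have hre : 1 < Complex.re (s : ℂ) := by
    simp only [Complex.natCast_re]
    exact_mod_cast lt_of_lt_of_le one_lt_two hs
  have hz : riemannZeta (s : ℂ) = ((∑' n : ℕ, 1 / ((n : ℝ) + 1) ^ s : ℝ) : ℂ) := by
    rw [zeta_eq_tsum_one_div_nat_add_one_cpow hre, Complex.ofReal_tsum]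
    refine tsum_congr fun n => ?_
    rw [Complex.cpow_natCast]
    push_cast
    ring
  have hp : (2 : ℂ) ^ ((1 : ℂ) - (s : ℂ)) = ((2 / 2 ^ s : ℝ) : ℂ) := by
    have h1 : (1 : ℂ) - (s : ℂ) = (((1 - (s : ℤ)) : ℤ) : ℂ) := by push_cast; ring
    rw [h1, Complex.cpow_intCast, zpow_sub₀ (two_ne_zero)]
    push_cast
    norm_num
  rw [hz, hp, ← Complex.ofReal_one, ← Complex.ofReal_sub, ← Complex.ofReal_mul,
    aux_eta_real hs]


private lemma aux_pow_diff {A B : ℝ} (hA : 0 ≤ A) (hAB : A ≤ B) (s : ℕ) :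
    B ^ s - A ^ s ≤ s * B ^ (s - 1) * (B - A) := by
  have hB : 0 ≤ B := hA.trans hAB
  have h := geom_sum₂_mul B A s
  rw [← h]
  have hbound : (∑ i ∈ Finset.range s, B ^ i * A ^ (s - 1 - i)) ≤ s * B ^ (s - 1) := by
    have := Finset.sum_le_card_nsmul (Finset.range s)
      (fun i => B ^ i * A ^ (s - 1 - i)) (B ^ (s - 1)) ?_
    · simpa [mul_comm] using this
    · intro i hi
      simp only [Finset.mem_range] at hi
      calc B ^ i * A ^ (s - 1 - i) ≤ B ^ i * B ^ (s - 1 - i) := by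
            exact mul_le_mul_of_nonneg_left (pow_le_pow_left₀ hA hAB _) (pow_nonneg hB i)
        _ = B ^ (i + (s - 1 - i)) := (pow_add B i (s - 1 - i)).symm
        _ = B ^ (s - 1) := by congr 1; omega
  exact mul_le_mul_of_nonneg_right hbound (by linarith)



private lemma aux_term_bound {s : ℕ} (hs : 2 ≤ s) (k : ℕ) :
    1 / (2 * (k : ℝ) + 3) ^ s - 1 / (2 * (k : ℝ) + 4) ^ s
      ≤ (s * 9 / 3 ^ s) * (1 / ((2 * (k : ℝ) + 2) * (2 * (k : ℝ) + 3) * (2 * (k : ℝ) + 4))) := by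
  have hk : (0:ℝ) ≤ (k : ℝ) := Nat.cast_nonneg k
  set A : ℝ := 2 * (k : ℝ) + 3 with hA
  set B : ℝ := 2 * (k : ℝ) + 4 with hB
  have hA3 : (3:ℝ) ≤ A := by rw [hA]; linarith
  have hA0 : (0:ℝ) < A := by linarith
  have hB0 : (0:ℝ) < B := by rw [hB]; linarith
  have hAB : A ≤ B := by rw [hA, hB]; linarith
  have hApow : (0:ℝ) < A ^ s := pow_pos hA0 s
  have hBpow : (0:ℝ) < B ^ s := pow_pos hB0 s
  have e1 : 1 / A ^ s - 1 / B ^ s = (B ^ s - A ^ s) / (A ^ s * B ^ s) := by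
    field_simp
  have hdiff : B ^ s - A ^ s ≤ s * B ^ (s - 1) := by
    have := aux_pow_diff hA0.le hAB s
    rw [hB, hA] at this ⊢
    push_cast at this ⊢
    linarith
  have e2 : (B ^ s - A ^ s) / (A ^ s * B ^ s) ≤ (s * B ^ (s-1)) / (A ^ s * B ^ s) :=
    div_le_div_of_nonneg_right hdiff (by positivity) |>.trans_eq rfl
  have e3 : (s * B ^ (s-1)) / (A ^ s * B ^ s) = s / (A ^ s * B) := by
    have hBs : B ^ (s-1) * B = B ^ s := by
      rw [← pow_succ]; congr 1; omega
    rw [div_eq_div_iff (by positivity) (by positivity)]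
    calc (s : ℝ) * B ^ (s-1) * (A ^ s * B) = s * (A ^ s * (B ^ (s-1) * B)) := by ring
      _ = s * (A ^ s * B ^ s) := by rw [hBs]
  have e4 : (s:ℝ) / (A ^ s * B) ≤ (s * 9 / 3 ^ s) * (1 / ((2 * (k : ℝ) + 2) * A * B)) := by
    have hx : (0:ℝ) < 2 * (k:ℝ) + 2 := by linarith
    have h2A : (2 * (k:ℝ) + 2) ≤ A := by rw [hA]; linarith
    have hAs : (3:ℝ) ^ (s - 2) ≤ A ^ (s - 2) := pow_le_pow_left₀ (by norm_num) hA3 _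
    have h3s : (3:ℝ) ^ s = 9 * 3 ^ (s - 2) := by
      rw [show (9:ℝ) = 3 ^ 2 by norm_num, ← pow_add]; congr 1; omega
    have hAsplit : A ^ s = A ^ (s - 2) * A ^ 2 := by rw [← pow_add]; congr 1; omega
    have key : (3:ℝ) ^ s * ((2 * (k:ℝ) + 2) * A * B) ≤ 9 * (A ^ s * B) := by
      rw [h3s, hAsplit]
      have step1 : (3:ℝ) ^ (s-2) * ((2 * (k:ℝ) + 2) * A * B) ≤ A ^ (s-2) * (A * A * B) := by
        apply mul_le_mul hAs ?_ (by positivity) (by positivity)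
        apply mul_le_mul_of_nonneg_right (mul_le_mul_of_nonneg_right h2A hA0.le) hB0.le
      nlinarith [step1]
    rw [div_mul_div_comm, mul_one, div_le_div_iff₀ (by positivity) (by positivity)]
    nlinarith [mul_le_mul_of_nonneg_left key (Nat.cast_nonneg (α := ℝ) s)]
  calc 1 / A ^ s - 1 / B ^ s = (B ^ s - A ^ s) / (A ^ s * B ^ s) := e1
    _ ≤ (s * B ^ (s-1)) / (A ^ s * B ^ s) := e2
    _ = s / (A ^ s * B) := e3
    _ ≤ _ := e4



private lemma aux_summable_t :
    Summable (fun k : ℕ => 1 / ((2 * (k : ℝ) + 2) * (2 * (k : ℝ) + 3) * (2 * (k : ℝ) + 4))) := by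
  refine (aux_summable_F (le_refl 2)).of_nonneg_of_le (fun k => by positivity) (fun k => ?_)
  have hk : (0:ℝ) ≤ (k:ℝ) := Nat.cast_nonneg k
  apply one_div_le_one_div_of_le (by positivity)
  nlinarith [sq_nonneg ((k:ℝ) + 1)]

private lemma aux_W_le :
    (∑' k : ℕ, 1 / ((2 * (k : ℝ) + 2) * (2 * (k : ℝ) + 3) * (2 * (k : ℝ) + 4))) ≤ 1 / 12 := by
  set u : ℕ → ℝ := fun k => (1/2) * (1 / ((2 * (k : ℝ) + 2) * (2 * (k : ℝ) + 3))) with hu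
  refine Real.tsum_le_of_sum_range_le (fun k => by positivity) (fun n => ?_)
  have hterm : ∀ k : ℕ, 1 / ((2 * (k : ℝ) + 2) * (2 * (k : ℝ) + 3) * (2 * (k : ℝ) + 4))
      ≤ u k - u (k + 1) := by
    intro k
    have hk : (0:ℝ) ≤ (k:ℝ) := Nat.cast_nonneg k
    rw [hu]
    push_cast
    rw [← sub_nonneg]
    have key : 1 / 2 * (1 / ((2 * (k:ℝ) + 2) * (2 * (k:ℝ) + 3)))
        - 1 / 2 * (1 / ((2 * ((k:ℝ)+1) + 2) * (2 * ((k:ℝ)+1) + 3)))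
        - 1 / ((2 * (k:ℝ) + 2) * (2 * (k:ℝ) + 3) * (2 * (k:ℝ) + 4))
        = (2 * (k:ℝ) + 2) / ((2 * (k:ℝ) + 2) * (2 * (k:ℝ) + 3) * (2 * (k:ℝ) + 4) * (2 * (k:ℝ) + 5)) := by
      field_simp
      ring
    rw [key]
    positivity
  calc ∑ k ∈ Finset.range n, 1 / ((2 * (k : ℝ) + 2) * (2 * (k : ℝ) + 3) * (2 * (k : ℝ) + 4))
      ≤ ∑ k ∈ Finset.range n, (u k - u (k+1)) := Finset.sum_le_sum (fun k _ => hterm k)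
    _ = u 0 - u n := Finset.sum_range_sub' u n
    _ ≤ u 0 := by
        have : 0 ≤ u n := by rw [hu]; positivity
        linarith
    _ = 1 / 12 := by rw [hu]; norm_num

private lemma aux_rho_le {s : ℕ} (hs : 2 ≤ s) :
    (∑' k : ℕ, (1 / (2 * ((k+1 : ℕ) : ℝ) + 1) ^ s - 1 / (2 * ((k+1 : ℕ) : ℝ) + 2) ^ s))
      ≤ 3 * s / (4 * 3 ^ s) := by
  have hsum1 : Summable (fun k : ℕ =>
      (1 / (2 * ((k+1 : ℕ) : ℝ) + 1) ^ s - 1 / (2 * ((k+1 : ℕ) : ℝ) + 2) ^ s)) := by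
    exact_mod_cast (summable_nat_add_iff 1).mpr (aux_summable_P hs)
  have hg : Summable (fun k : ℕ =>
      (s * 9 / 3 ^ s) * (1 / ((2 * (k : ℝ) + 2) * (2 * (k : ℝ) + 3) * (2 * (k : ℝ) + 4)))) :=
    aux_summable_t.mul_left _
  have h1 : (∑' k : ℕ, (1 / (2 * ((k+1 : ℕ) : ℝ) + 1) ^ s - 1 / (2 * ((k+1 : ℕ) : ℝ) + 2) ^ s))
      ≤ ∑' k : ℕ, (s * 9 / 3 ^ s) * (1 / ((2 * (k : ℝ) + 2) * (2 * (k : ℝ) + 3) * (2 * (k : ℝ) + 4))) := by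
    refine Summable.tsum_le_tsum (fun k => ?_) hsum1 hg
    have := aux_term_bound hs k
    push_cast
    push_cast at this
    refine le_trans (le_of_eq ?_) this
    ring
  refine h1.trans ?_
  rw [tsum_mul_left]
  calc (s * 9 / 3 ^ s : ℝ) * ∑' k : ℕ, (1 / ((2 * (k : ℝ) + 2) * (2 * (k : ℝ) + 3) * (2 * (k : ℝ) + 4)))
      ≤ (s * 9 / 3 ^ s) * (1 / 12) := by
        apply mul_le_mul_of_nonneg_left aux_W_le (by positivity)
    _ = 3 * s / (4 * 3 ^ s) := by field_simp; ring


private lemma aux_key (i : ℕ) (hi : 1 ≤ i) : 9 * i * 4 ^ i ≤ 4 * 9 ^ i := by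
  induction i with
  | zero => omega
  | succ n ih =>
    rcases Nat.eq_or_lt_of_le hi with h | h
    · simp [← h]
    · have hn : 1 ≤ n := by omega
      have := ih hn
      have h4 : 0 < 4 ^ n := Nat.pow_pos (by norm_num)
      calc 9 * (n+1) * 4 ^ (n+1) = 4 * (9 * (n+1) * 4 ^ n) := by ring
        _ ≤ 4 * (9 * (2*n) * 4 ^ n) := by
            have : n + 1 ≤ 2 * n := by omega
            exact Nat.mul_le_mul_left _ (Nat.mul_le_mul_right _ (Nat.mul_le_mul_left _ this))
        _ = 8 * (9 * n * 4 ^ n) := by ring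
        _ ≤ 8 * (4 * 9 ^ n) := Nat.mul_le_mul_left _ this
        _ ≤ 9 ^ (n+1) * 4 := by
            calc 8 * (4 * 9 ^ n) = 32 * 9 ^ n := by ring
              _ ≤ 36 * 9 ^ n := Nat.mul_le_mul_right _ (by norm_num)
              _ = 9 ^ (n+1) * 4 := by ring
        _ = 4 * 9 ^ (n+1) := by ring


/-- Lemma 3.1 (2): with `a 0 = 1/2` and `a i = (1 - 2^(1-2i)) ζ(2i)` for `i ≥ 1`,
there is a constant `C > 1` with `1/(C·4^i) < a (i+1) - a i < C/4^i` for all `i`. -/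
theorem stmt3 (a : ℕ → ℝ)
    (h0 : a 0 = 1 / 2)
    (hi : ∀ i : ℕ, 1 ≤ i →
      (a i : ℂ) = (1 - (2 : ℂ) ^ ((1 : ℂ) - 2 * (i : ℂ))) * riemannZeta (2 * (i : ℂ))) :
    ∃ C : ℝ, 1 < C ∧ ∀ i : ℕ,
      1 / (C * 2 ^ (2 * i)) < a (i + 1) - a i ∧ a (i + 1) - a i < C / 2 ^ (2 * i) := by
  have ha : ∀ j : ℕ, 1 ≤ j → a j
      = ∑' k : ℕ, (1 / (2 * (k : ℝ) + 1) ^ (2*j) - 1 / (2 * (k : ℝ) + 2) ^ (2*j)) := by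
    intro j hj
    have h2j : (2:ℕ) ≤ 2 * j := by omega
    have heta := aux_eta h2j
    have hcast : (((2 * j : ℕ)) : ℂ) = 2 * (j : ℂ) := by push_cast; ring
    rw [hcast] at heta
    have h2 := hi j hj
    rw [heta] at h2
    exact_mod_cast h2
  have hdec : ∀ s : ℕ, 2 ≤ s →
      (∑' k : ℕ, (1 / (2 * (k : ℝ) + 1) ^ s - 1 / (2 * (k : ℝ) + 2) ^ s))
      = (1 - 1 / 2 ^ s)
        + ∑' k : ℕ, (1 / (2 * ((k + 1 : ℕ) : ℝ) + 1) ^ s - 1 / (2 * ((k + 1 : ℕ) : ℝ) + 2) ^ s) := by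
    intro s hs
    rw [Summable.tsum_eq_zero_add (aux_summable_P hs)]
    congr 1
    norm_num
  have hRnn : ∀ s : ℕ,
      0 ≤ ∑' k : ℕ, (1 / (2 * ((k + 1 : ℕ) : ℝ) + 1) ^ s - 1 / (2 * ((k + 1 : ℕ) : ℝ) + 2) ^ s) :=
    fun s => tsum_nonneg (fun k => aux_P_nonneg s (k + 1))
  refine ⟨13, by norm_num, fun i => ?_⟩
  rcases Nat.eq_zero_or_pos i with h0i | h1i
  · subst h0i
    have e1 := ha 1 le_rfl
    rw [hdec 2 le_rfl] at e1
    set R2 : ℝ := ∑' k : ℕ,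
      (1 / (2 * ((k + 1 : ℕ) : ℝ) + 1) ^ 2 - 1 / (2 * ((k + 1 : ℕ) : ℝ) + 2) ^ 2) with hR2
    have hub : R2 ≤ 3 * 2 / (4 * 3 ^ 2) := aux_rho_le (s := 2) le_rfl
    have hnn : 0 ≤ R2 := hRnn 2
    rw [h0]
    norm_num at e1 hub ⊢
    rw [e1]
    constructor <;> linarith
  · -- i ≥ 1
    have e1 := ha i h1i
    have e2 := ha (i + 1) (by omega)
    rw [hdec (2*i) (by omega)] at e1
    rw [hdec (2*(i+1)) (by omega)] at e2
    set RA : ℝ := ∑' k : ℕ,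
      (1 / (2 * ((k + 1 : ℕ) : ℝ) + 1) ^ (2*i) - 1 / (2 * ((k + 1 : ℕ) : ℝ) + 2) ^ (2*i)) with hRA
    set RB : ℝ := ∑' k : ℕ,
      (1 / (2 * ((k + 1 : ℕ) : ℝ) + 1) ^ (2*(i+1)) - 1 / (2 * ((k + 1 : ℕ) : ℝ) + 2) ^ (2*(i+1))) with hRB
    have hx4 : (2:ℝ) ^ (2*i) = 4 ^ i := by rw [pow_mul]; norm_num
    have hx4' : (2:ℝ) ^ (2*(i+1)) = 4 * 4 ^ i := by
      rw [pow_mul]; norm_num; rw [pow_succ]; ring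
    have h9 : (3:ℝ) ^ (2*i) = 9 ^ i := by rw [pow_mul]; norm_num
    have h9' : (3:ℝ) ^ (2*(i+1)) = 9 * 9 ^ i := by
      rw [pow_mul]; norm_num; rw [pow_succ]; ring
    have h4pos : (0:ℝ) < 4 ^ i := by positivity
    have h9pos : (0:ℝ) < 9 ^ i := by positivity
    have hk1 : 9 * (i:ℝ) * 4 ^ i ≤ 4 * 9 ^ i := by exact_mod_cast aux_key i h1i
    have hk2 : 9 * ((i:ℝ) + 1) * (4 * 4 ^ i) ≤ 4 * (9 * 9 ^ i) := by
      have := aux_key (i+1) (by omega)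
      have h := (Nat.cast_le (α := ℝ)).mpr this
      push_cast at h
      calc 9 * ((i:ℝ) + 1) * (4 * 4 ^ i) = 9 * ((i:ℝ)+1) * 4 ^ (i+1) := by rw [pow_succ]; ring
        _ ≤ 4 * 9 ^ (i+1) := h
        _ = 4 * (9 * 9 ^ i) := by rw [pow_succ]; ring
    have hAnn : 0 ≤ RA := hRnn _
    have hBnn : 0 ≤ RB := hRnn _
    have hA : RA ≤ (2/3) / 4 ^ i := by
      refine (aux_rho_le (s := 2*i) (by omega)).trans ?_
      rw [h9, div_le_div_iff₀ (by positivity) (by positivity)]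
      push_cast
      nlinarith [hk1]
    have hB : RB ≤ (1/6) / 4 ^ i := by
      refine (aux_rho_le (s := 2*(i+1)) (by omega)).trans ?_
      rw [h9', div_le_div_iff₀ (by positivity) (by positivity)]
      push_cast
      nlinarith [hk2]
    have hd : a (i+1) - a i = 3/4 / 4 ^ i + RB - RA := by
      rw [e1, e2, hx4, hx4']
      field_simp
      ring
    rw [hd, hx4]
    have hq1 : 1 / (13 * (4:ℝ) ^ i) < 1/12 / 4 ^ i := by
      rw [div_lt_div_iff₀ (show (0:ℝ) < 13 * 4 ^ i by positivity) h4pos]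
      nlinarith [h4pos]
    have hq2 : (3:ℝ)/4 / 4 ^ i - 2/3 / 4 ^ i = 1/12 / 4 ^ i := by ring
    have hq3 : (3:ℝ)/4 / 4 ^ i + 1/6 / 4 ^ i = 11/12 / 4 ^ i := by ring
    have hq4 : (11:ℝ)/12 / 4 ^ i < 13 / 4 ^ i := by
      rw [div_lt_div_iff₀ h4pos h4pos]
      nlinarith [h4pos]
    constructor
    · linarith
    · linarith
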